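/- Let k ≥ 1, let r_1, …, r_k be positive reals with r = r_1 + ⋯ + r_k, let b_1, …, b_k be reals with b = b_1 + ⋯ + b_k, and let A_1, …, A_k : ℝ → ℝ be nondecreasing functions with A = A_1 + ⋯ + A_k. Define U(t) = sup_{0 ≤ s ≤ t} (A(t) − A(s) − r·(t − s)) and U_l(t) = sup_{0 ≤ s ≤ t} (A_l(t) − A_l(s) − r_l·(t − s)), and let N(t) = ⌈max(0, U(t) − b)⌉ and N_l(t) = ⌈max(0, U_l(t) − b_l)⌉ be the numbers of messages waiting for tokens at time t in the one-bucket and in the l-th sub-bucket system, respectively. Then for every t ≥ 0, N(t) ≤ N_1(t) + ⋯ + N_k(t). (Pointwise form of the paper's Proposition 1: at every instant, the one-bucket system has no more messages accruing rate-limiting delay than the k sub-token-bucket system, irrespective of how messages are distributed to the k sub-token buckets.) -/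

import Mathlib

lemma ceil_sum_le {α : Type*} [Field α] [LinearOrder α] [IsStrictOrderedRing α] [FloorRing α]
    {ι : Type*} (s : Finset ι) (f : ι → α) :
    ⌈∑ i ∈ s, f i⌉ ≤ ∑ i ∈ s, ⌈f i⌉ := by
  classical
  induction s using Finset.induction with
  | empty => simp
  | insert a s h ih =>
    rw [Finset.sum_insert h, Finset.sum_insert h]
    exact le_trans (Int.ceil_add_le _ _) (by omega)

/-- Pointwise form of Proposition 1: at every instant `t ≥ 0`, the one-bucket system
has no more messages accruing rate-limiting delay than the k sub-token-bucket system. -/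
theorem prop1_pointwise (k : ℕ) (hk : 1 ≤ k)
    (rl : Fin k → ℝ) (hrl : ∀ l, 0 < rl l)
    (bl : Fin k → ℝ)
    (Al : Fin k → ℝ → ℝ) (hAl : ∀ l, Monotone (Al l))
    (r : ℝ) (hr : r = ∑ l, rl l)
    (b : ℝ) (hb : b = ∑ l, bl l)
    (A : ℝ → ℝ) (hA : A = ∑ l, Al l)
    (U : ℝ → ℝ)
    (hU : ∀ t, U t = sSup ((fun s => A t - A s - r * (t - s)) '' Set.Icc 0 t))
    (Ul : Fin k → ℝ → ℝ)
    (hUl : ∀ l t, Ul l t =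
      sSup ((fun s => Al l t - Al l s - rl l * (t - s)) '' Set.Icc 0 t))
    (N : ℝ → ℤ) (hN : ∀ t, N t = ⌈max 0 (U t - b)⌉)
    (Nl : Fin k → ℝ → ℤ) (hNl : ∀ l t, Nl l t = ⌈max 0 (Ul l t - bl l)⌉)
    (t : ℝ) (ht : 0 ≤ t) :
    N t ≤ ∑ l, Nl l t := by
  -- bounded above for each sub-system
  have hbdd : ∀ l, BddAbove ((fun s => Al l t - Al l s - rl l * (t - s)) '' Set.Icc 0 t) := by
    intro l
    refine ⟨Al l t - Al l 0, ?_⟩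
    rintro x ⟨s, hs, rfl⟩
    dsimp only
    have h1 : Al l 0 ≤ Al l s := hAl l hs.1
    have h2 : 0 ≤ rl l * (t - s) := mul_nonneg (hrl l).le (by linarith [hs.2])
    linarith
  -- U t ≤ ∑ Ul l t
  have hUle : U t ≤ ∑ l, Ul l t := by
    rw [hU]
    apply csSup_le ((Set.nonempty_Icc.2 ht).image _)
    rintro x ⟨s, hs, rfl⟩
    dsimp only
    have key : A t - A s - r * (t - s) = ∑ l, (Al l t - Al l s - rl l * (t - s)) := by
      rw [hA, hr]
      simp [Finset.sum_sub_distrib, Finset.sum_mul]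
    rw [key]
    apply Finset.sum_le_sum
    intro l _
    rw [hUl]
    exact le_csSup (hbdd l) ⟨s, hs, rfl⟩
  -- max 0 (U t - b) ≤ ∑ max 0 (Ul l t - bl l)
  have hmax : max 0 (U t - b) ≤ ∑ l, max 0 (Ul l t - bl l) := by
    apply max_le
    · exact Finset.sum_nonneg fun l _ => le_max_left _ _
    · rw [hb]
      calc U t - ∑ l, bl l ≤ ∑ l, Ul l t - ∑ l, bl l := by linarith
        _ = ∑ l, (Ul l t - bl l) := by rw [Finset.sum_sub_distrib]
        _ ≤ ∑ l, max 0 (Ul l t - bl l) :=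
            Finset.sum_le_sum fun l _ => le_max_right _ _
  rw [hN]
  calc ⌈max 0 (U t - b)⌉ ≤ ⌈∑ l, max 0 (Ul l t - bl l)⌉ := Int.ceil_le_ceil hmax
    _ ≤ ∑ l, ⌈max 0 (Ul l t - bl l)⌉ := ceil_sum_le _ _
    _ = ∑ l, Nl l t := by simp [hNl]
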